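/- arXiv:1803.04939 — 2 statements merged into one kernel-verified Lean document; each statement's English description precedes it below -/
import Mathlib

section
/- Let v : ℝⁿ → ℝⁿ be a bounded measurable function with compact support, and let ρ_ε be a mollifier (ε > 0). Then for every x ∈ ℝⁿ the following identity holds: ((ρ_ε⋆v)(x)) ⊗ ((ρ_ε⋆v)(x)) − (ρ_ε ⋆ (v⊗v))(x) = (v(x) − (ρ_ε⋆v)(x)) ⊗ (v(x) − (ρ_ε⋆v)(x)) − ∫_{ℝⁿ} ρ_ε(y) · (v(x−y) − v(x)) ⊗ (v(x−y) − v(x)) dy. -/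
open MeasureTheory Metric Set Function Filter
open scoped ENNReal Topology

noncomputable section

/-- `ℝⁿ` with the Euclidean norm. -/
abbrev Eu (n : ℕ) : Type := EuclideanSpace ℝ (Fin n)

/-- The `C^{0,α}` (Hölder) norm of `v` on a set `K`. -/
def holderNorm {E F : Type*} [NormedAddCommGroup F] [PseudoMetricSpace E]
    (α : ℝ) (K : Set E) (v : E → F) : ℝ :=
  sSup ((fun x => ‖v x‖) '' K) +
    sSup ((fun q : E × E => ‖v q.1 - v q.2‖ / dist q.1 q.2 ^ α) ''
      {q : E × E | q.1 ∈ K ∧ q.2 ∈ K ∧ q.1 ≠ q.2})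

/-- Finiteness of the `C^{0,α}` norm of `v` on `K`. -/
def HolderBdd {E F : Type*} [NormedAddCommGroup F] [PseudoMetricSpace E]
    (α : ℝ) (K : Set E) (v : E → F) : Prop :=
  BddAbove ((fun x => ‖v x‖) '' K) ∧
    BddAbove ((fun q : E × E => ‖v q.1 - v q.2‖ / dist q.1 q.2 ^ α) ''
      {q : E × E | q.1 ∈ K ∧ q.2 ∈ K ∧ q.1 ≠ q.2})

/-- The rescaled mollifier `ρ_ε(x) = ε^{-n} ρ(x/ε)`. -/
def mollify {n : ℕ} (ρ : Eu n → ℝ) (ε : ℝ) (z : Eu n) : ℝ :=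
  (ε ^ n)⁻¹ * ρ (ε⁻¹ • z)

/-- `ρ` is a standard mollifier: smooth, nonnegative, radial, supported in the
unit ball, with total integral one. -/
def IsMollifier {n : ℕ} (ρ : Eu n → ℝ) : Prop :=
  ContDiff ℝ (⊤ : ℕ∞) ρ ∧ HasCompactSupport ρ ∧ (∀ z, 0 ≤ ρ z) ∧
    Function.support ρ ⊆ ball 0 1 ∧ (∀ x y : Eu n, ‖x‖ = ‖y‖ → ρ x = ρ y) ∧
    ∫ z, ρ z = 1

/-- The tensor product `v ⊗ w`, the matrix with entries `vᵢ wⱼ`. -/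
def tensor {n : ℕ} (v w : Eu n) : Fin n → Fin n → ℝ := fun i j => v i * w j

/-- Mollification `ρ_ε ⋆ g` of a vector field. -/
def convV {n : ℕ} (ρ : Eu n → ℝ) (ε : ℝ) (g : Eu n → Eu n) (x : Eu n) : Eu n :=
  ∫ y, mollify ρ ε (x - y) • g y

/-- Mollification `ρ_ε ⋆ G` of a matrix-valued field (entrywise). -/
def convM {n : ℕ} (ρ : Eu n → ℝ) (ε : ℝ) (G : Eu n → Fin n → Fin n → ℝ) (x : Eu n) :
    Fin n → Fin n → ℝ :=
  ∫ y, mollify ρ ε (x - y) • G y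

/-- The partial derivative `∂f/∂xⱼ` of a scalar function on `ℝⁿ`. -/
def pd {n : ℕ} (j : Fin n) (f : Eu n → ℝ) (x : Eu n) : ℝ :=
  fderiv ℝ f x (EuclideanSpace.single j 1)

set_option maxHeartbeats 1000000 in
lemma eu_abs_le {n : ℕ} (a : Eu n) (i : Fin n) : |a i| ≤ ‖a‖ := by
  rw [EuclideanSpace.norm_eq]
  have h : (a i) ^ 2 ≤ ∑ j, ‖a j‖ ^ 2 := by
    have := Finset.single_le_sum (f := fun j => ‖a j‖ ^ 2)
      (fun j _ => sq_nonneg _) (Finset.mem_univ i)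
    simpa [Real.norm_eq_abs, sq_abs] using this
  calc |a i| = Real.sqrt ((a i) ^ 2) := (Real.sqrt_sq_eq_abs _).symm
    _ ≤ Real.sqrt (∑ j, ‖a j‖ ^ 2) := Real.sqrt_le_sqrt h

set_option maxHeartbeats 1000000 in
lemma tensor_norm_le {n : ℕ} (a b : Eu n) : ‖tensor a b‖ ≤ ‖a‖ * ‖b‖ := by
  have hb : (0:ℝ) ≤ ‖a‖ * ‖b‖ := by positivity
  apply (pi_norm_le_iff_of_nonneg hb).2
  intro i
  apply (pi_norm_le_iff_of_nonneg hb).2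
  intro j
  show ‖a i * b j‖ ≤ _
  rw [Real.norm_eq_abs, abs_mul]
  exact mul_le_mul (eu_abs_le a i) (eu_abs_le b j) (abs_nonneg _) (norm_nonneg _)

set_option maxHeartbeats 1000000 in
lemma integral_matrix_apply {n : ℕ} {F : Eu n → Fin n → Fin n → ℝ}
    (hF : Integrable F) (i j : Fin n) :
    (∫ y, F y) i j = ∫ y, F y i j := by
  let L1 : (Fin n → Fin n → ℝ) →L[ℝ] (Fin n → ℝ) := ContinuousLinearMap.proj i
  let L2 : (Fin n → ℝ) →L[ℝ] ℝ := ContinuousLinearMap.proj j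
  have := (L2.comp L1).integral_comp_comm hF
  simpa [L1, L2] using this.symm


set_option maxHeartbeats 1000000 in
/-- the elementary identity (3.37): for a bounded, compactly
supported measurable vector field `v` and any `ε > 0`,
`(ρ_ε⋆v)⊗(ρ_ε⋆v) − ρ_ε⋆(v⊗v)
  = (v−ρ_ε⋆v)⊗(v−ρ_ε⋆v) − ∫ ρ_ε(y) (δ_y v ⊗ δ_y v) dy` pointwise. -/
theorem mollified_tensor_identity
    {n : ℕ} (ρ : Eu n → ℝ) (hρ : IsMollifier ρ)
    (v : Eu n → Eu n) (hvm : Measurable v)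
    (hvb : ∃ Cv : ℝ, ∀ x, ‖v x‖ ≤ Cv) (hvcs : HasCompactSupport v)
    (ε : ℝ) (hε : 0 < ε) :
    ∀ x : Eu n,
      tensor (convV ρ ε v x) (convV ρ ε v x)
        - convM ρ ε (fun y => tensor (v y) (v y)) x =
      tensor (v x - convV ρ ε v x) (v x - convV ρ ε v x)
        - ∫ y, mollify ρ ε y • tensor (v (x - y) - v x) (v (x - y) - v x) := by
  obtain ⟨hρs, hρcs, hρnn, hρsupp, hρrad, hρint⟩ := hρ
  obtain ⟨Cv, hCv⟩ := hvb
  have hCv0 : 0 ≤ Cv := le_trans (norm_nonneg _) (hCv 0)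
  set m : Eu n → ℝ := mollify ρ ε with hm_def
  have hm_cont : Continuous m := by
    exact continuous_const.mul (hρs.continuous.comp (continuous_const_smul ε⁻¹))
  have hm_meas : Measurable m := hm_cont.measurable
  have hm_cs : HasCompactSupport m := by
    apply HasCompactSupport.intro (isCompact_closedBall (0 : Eu n) ε)
    intro z hz
    have hz' : ε < ‖z‖ := by
      simpa [mem_closedBall_zero_iff, not_le] using hz
    have hρ0 : ρ (ε⁻¹ • z) = 0 := by
      by_contra h
      have hb := hρsupp (mem_support.2 h)
      rw [mem_ball_zero_iff, norm_smul, Real.norm_eq_abs,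
        abs_of_pos (inv_pos.2 hε)] at hb
      have h2 := mul_lt_mul_of_pos_left hb hε
      rw [mul_one, ← mul_assoc, mul_inv_cancel₀ hε.ne', one_mul] at h2
      linarith
    simp [hm_def, mollify, hρ0]
  have hm_int : Integrable m := hm_cont.integrable_of_hasCompactSupport hm_cs
  have hm_one : ∫ y, m y = 1 := by
    rw [hm_def]
    unfold mollify
    rw [MeasureTheory.integral_const_mul]
    rw [MeasureTheory.Measure.integral_comp_inv_smul_of_nonneg volume ρ hε.le]
    rw [finrank_euclideanSpace_fin, hρint, smul_eq_mul, mul_one,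
      inv_mul_cancel₀ (pow_ne_zero _ hε.ne')]
  intro x
  -- change of variables
  have flip : ∀ {F : Type} [NormedAddCommGroup F] [NormedSpace ℝ F] (f : Eu n → F),
      ∫ y, m y • f (x - y) = ∫ y, m (x - y) • f y := by
    intro F _ _ f
    have h := MeasureTheory.integral_sub_left_eq_self
      (fun y => m (x - y) • f y) (volume : Measure (Eu n)) x
    simpa [sub_sub_cancel] using h
  have hsubm : Measurable fun y : Eu n => x - y := measurable_const.sub measurable_id
  have hvxm : Measurable fun y => v (x - y) := hvm.comp hsubm
  have hvk : ∀ k : Fin n, Measurable fun y => v (x - y) k :=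
    fun k => (measurable_pi_apply k).comp ((WithLp.measurable_ofLp _ _).comp hvxm)
  -- integrabilities
  have hI1 : Integrable fun y => m y • v (x - y) := by
    apply Integrable.mono' (hm_int.abs.mul_const Cv)
    · exact (hm_meas.smul hvxm).aestronglyMeasurable
    · filter_upwards with y
      rw [norm_smul, Real.norm_eq_abs]
      exact mul_le_mul_of_nonneg_left (hCv (x - y)) (abs_nonneg _)
  have hI2 : ∀ k : Fin n, Integrable fun y => m y * v (x - y) k := by
    intro k
    apply Integrable.mono' (hm_int.abs.mul_const Cv)
    · exact (hm_meas.mul (hvk k)).aestronglyMeasurable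
    · filter_upwards with y
      rw [Real.norm_eq_abs, abs_mul]
      exact mul_le_mul_of_nonneg_left
        (le_trans (eu_abs_le _ k) (hCv (x - y))) (abs_nonneg _)
  have hI3 : ∀ k l : Fin n, Integrable fun y => m y * (v (x - y) k * v (x - y) l) := by
    intro k l
    apply Integrable.mono' (hm_int.abs.mul_const (Cv * Cv))
    · exact (hm_meas.mul ((hvk k).mul (hvk l))).aestronglyMeasurable
    · filter_upwards with y
      rw [Real.norm_eq_abs, abs_mul, abs_mul]
      refine mul_le_mul_of_nonneg_left ?_ (abs_nonneg _)
      exact mul_le_mul (le_trans (eu_abs_le _ k) (hCv (x - y)))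
        (le_trans (eu_abs_le _ l) (hCv (x - y))) (abs_nonneg _) hCv0
  have hTmeas : ∀ (w : Eu n), Measurable fun y => m y • tensor (v (x - y) - w) (v (x - y) - w) := by
    intro w
    apply hm_meas.smul
    apply measurable_pi_lambda
    intro i
    apply measurable_pi_lambda
    intro j
    exact ((hvk i).sub measurable_const).mul ((hvk j).sub measurable_const)
  have hIT : ∀ (w : Eu n),
      Integrable fun y => m y • tensor (v (x - y) - w) (v (x - y) - w) := by
    intro w
    apply Integrable.mono' (hm_int.abs.mul_const ((Cv + ‖w‖) * (Cv + ‖w‖)))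
    · exact (hTmeas w).aestronglyMeasurable
    · filter_upwards with y
      rw [norm_smul, Real.norm_eq_abs]
      refine mul_le_mul_of_nonneg_left ?_ (abs_nonneg _)
      refine le_trans (tensor_norm_le _ _) ?_
      have hw : ‖v (x - y) - w‖ ≤ Cv + ‖w‖ :=
        le_trans (norm_sub_le _ _) (add_le_add (hCv _) le_rfl)
      exact mul_le_mul hw hw (norm_nonneg _) (by positivity)
  -- rewrite convolutions as integrals against m y
  have hA : convV ρ ε v x = ∫ y, m y • v (x - y) := by
    rw [convV, ← hm_def, flip v]
  have hM : convM ρ ε (fun y => tensor (v y) (v y)) x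
      = ∫ y, m y • tensor (v (x - y)) (v (x - y)) := by
    rw [convM, ← hm_def, flip (fun z => tensor (v z) (v z))]
  set A : Eu n := convV ρ ε v x with hA_def
  have hAk : ∀ k : Fin n, A k = ∫ y, m y * v (x - y) k := by
    intro k
    have h := (EuclideanSpace.proj (𝕜 := ℝ) k).integral_comp_comm hI1
    rw [hA]
    simpa using h.symm
  funext i j
  have hMij : convM ρ ε (fun y => tensor (v y) (v y)) x i j
      = ∫ y, m y * (v (x - y) i * v (x - y) j) := by
    rw [hM]
    have h0 : Integrable fun y => m y • tensor (v (x - y)) (v (x - y)) := by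
      simpa using hIT 0
    rw [integral_matrix_apply h0 i j]
    rfl
  have hRij : (∫ y, m y • tensor (v (x - y) - v x) (v (x - y) - v x)) i j
      = ∫ y, m y * ((v (x - y) i - v x i) * (v (x - y) j - v x j)) := by
    rw [integral_matrix_apply (hIT (v x)) i j]
    rfl
  have hsplit : ∫ y, m y * ((v (x - y) i - v x i) * (v (x - y) j - v x j))
      = (∫ y, m y * (v (x - y) i * v (x - y) j)) - (∫ y, m y * v (x - y) i) * v x j
        - v x i * (∫ y, m y * v (x - y) j) + (∫ y, m y) * (v x i * v x j) := by
    have heq : (fun y => m y * ((v (x - y) i - v x i) * (v (x - y) j - v x j)))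
        = fun y => ((m y * (v (x - y) i * v (x - y) j) - (m y * v (x - y) i) * v x j)
          - v x i * (m y * v (x - y) j)) + m y * (v x i * v x j) := by
      funext y; ring
    have e1 : Integrable (fun y => m y * (v (x - y) i * v (x - y) j)
        - m y * v (x - y) i * v x j) volume := (hI3 i j).sub ((hI2 i).mul_const _)
    have e2 : Integrable (fun y => (m y * (v (x - y) i * v (x - y) j)
        - m y * v (x - y) i * v x j) - v x i * (m y * v (x - y) j)) volume :=
      e1.sub ((hI2 j).const_mul _)
    rw [heq, integral_add e2 (hm_int.mul_const _),
      integral_sub e1 ((hI2 j).const_mul _),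
      integral_sub (hI3 i j) ((hI2 i).mul_const _),
      MeasureTheory.integral_mul_const, MeasureTheory.integral_const_mul,
      MeasureTheory.integral_mul_const]
  have goal_i : tensor A A i j = A i * A j := rfl
  show tensor A A i j - convM ρ ε (fun y => tensor (v y) (v y)) x i j
      = tensor (v x - A) (v x - A) i j
        - (∫ y, m y • tensor (v (x - y) - v x) (v (x - y) - v x)) i j
  have ht2 : tensor (v x - A) (v x - A) i j = (v x i - A i) * (v x j - A j) := rfl
  rw [goal_i, hMij, ht2, hRij, hsplit, ← hAk i, ← hAk j, hm_one]
  ring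
end
end

section
/- Let Ω̃ ⊂ ℝⁿ be a bounded open set, α ∈ (0,1], and u : cl Ω̃ → ℝⁿ with ‖u‖_{C^{0,α}(cl Ω̃)} < ∞. Let Ω₃ ⊂⊂ Ω₂ ⊂⊂ Ω₁ ⊂⊂ Ω̃ be open sets with dist(Ω₃, ℝⁿ∖Ω₂) > η, dist(Ω₂, ℝⁿ∖Ω₁) > η, dist(Ω₁, ℝⁿ∖Ω̃) > η for some η > 0, and let I₂ ∈ C_c^∞(ℝⁿ) equal 1 on Ω₂ and equal 0 outside Ω₁; write ū := I₂·u extended by 0 outside Ω̃. Then there is a constant C, depending only on I₂, ρ, n, α and η, such that for every ε with 0 < ε < η/2: sup_{x ∈ Ω₃} | (ρ_ε ⋆ (I₂·(u⊗u)))(x) − ((ρ_ε⋆ū)(x) ⊗ (ρ_ε⋆ū)(x)) | ≤ C · ε^{2α} · ‖u‖²_{C^{0,α}(cl Ω̃)}. -/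
open MeasureTheory Metric Set Function Filter
open scoped ENNReal Topology

noncomputable section

lemma coord_abs_le_norm {n : ℕ} (w : Eu n) (i : Fin n) : |w i| ≤ ‖w‖ := by
  rw [EuclideanSpace.norm_eq, ← Real.sqrt_sq_eq_abs]
  apply Real.sqrt_le_sqrt
  have := Finset.single_le_sum (f := fun j => ‖w j‖ ^ 2)
    (fun j _ => sq_nonneg _) (Finset.mem_univ i)
  simpa [Real.norm_eq_abs, sq_abs] using this

lemma holderNorm_nonneg {E F : Type*} [NormedAddCommGroup F] [PseudoMetricSpace E]
    (α : ℝ) (K : Set E) (v : E → F) : 0 ≤ holderNorm α K v := by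
  apply add_nonneg <;> apply Real.sSup_nonneg
  · rintro x ⟨y, -, rfl⟩; positivity
  · rintro x ⟨q, -, rfl⟩; positivity

lemma holder_bound {E F : Type*} [NormedAddCommGroup F] [MetricSpace E]
    {α : ℝ} (hα0 : 0 < α) {K : Set E} {u : E → F} (hu : HolderBdd α K u)
    {a b : E} (ha : a ∈ K) (hb : b ∈ K) :
    ‖u a - u b‖ ≤ holderNorm α K u * dist a b ^ α := by
  rcases eq_or_ne a b with rfl | hab
  · simp [Real.zero_rpow hα0.ne']
  · have hd : 0 < dist a b := dist_pos.2 hab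
    have hdα : 0 < dist a b ^ α := Real.rpow_pos_of_pos hd α
    have hmem : ‖u a - u b‖ / dist a b ^ α ∈
        ((fun q : E × E => ‖u q.1 - u q.2‖ / dist q.1 q.2 ^ α) ''
          {q : E × E | q.1 ∈ K ∧ q.2 ∈ K ∧ q.1 ≠ q.2}) := ⟨(a, b), ⟨ha, hb, hab⟩, rfl⟩
    have h1 := le_csSup hu.2 hmem
    have h2 : 0 ≤ sSup ((fun x => ‖u x‖) '' K) :=
      Real.sSup_nonneg (by rintro x ⟨y, -, rfl⟩; positivity)
    calc ‖u a - u b‖ = (‖u a - u b‖ / dist a b ^ α) * dist a b ^ α :=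
          (div_mul_cancel₀ _ hdα.ne').symm
      _ ≤ holderNorm α K u * dist a b ^ α := by
          unfold holderNorm
          apply mul_le_mul_of_nonneg_right _ hdα.le
          exact h1.trans (le_add_of_nonneg_left h2)

lemma holder_continuousOn {E F : Type*} [NormedAddCommGroup F] [PseudoMetricSpace E]
    {α : ℝ} (hα0 : 0 < α) {K : Set E} {u : E → F} {M : ℝ}
    (H : ∀ a ∈ K, ∀ b ∈ K, ‖u a - u b‖ ≤ M * dist a b ^ α) : ContinuousOn u K := by
  intro y₀ hy₀
  rw [ContinuousWithinAt, tendsto_iff_dist_tendsto_zero]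
  have h1 : Tendsto (fun y : E => dist y y₀) (𝓝[K] y₀) (𝓝 0) := by
    have h : ContinuousWithinAt (fun y : E => dist y y₀) K y₀ :=
      (continuous_id.dist continuous_const).continuousWithinAt
    simpa [ContinuousWithinAt] using h
  have h2 : ContinuousAt (fun t : ℝ => M * t ^ α) 0 :=
    continuousAt_const.mul (Real.continuousAt_rpow_const 0 α (Or.inr hα0.le))
  have lim : Tendsto (fun y => M * dist y y₀ ^ α) (𝓝[K] y₀) (𝓝 0) := by
    have := h2.tendsto.comp h1
    simpa [Function.comp_def, Real.zero_rpow hα0.ne'] using this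
  refine squeeze_zero' ?_ ?_ lim
  · exact Eventually.of_forall fun y => dist_nonneg
  · filter_upwards [self_mem_nhdsWithin] with y hy
    rw [dist_eq_norm]
    exact H y hy y₀ hy₀

/-- estimate (3.39): for `0 < ε < η/2`,
`sup_{x ∈ Ω₃} |ρ_ε⋆(I₂·(u⊗u))(x) − (ρ_ε⋆ū)(x)⊗(ρ_ε⋆ū)(x)| ≤ C ε^{2α} ‖u‖²_{C^{0,α}}`. -/
theorem mollified_tensor_sup_estimate
    {n : ℕ} (ρ : Eu n → ℝ) (hρ : IsMollifier ρ)
    {α : ℝ} (hα0 : 0 < α) (hα1 : α ≤ 1)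
    {Ω' Ω₁ Ω₂ Ω₃ : Set (Eu n)} (hΩ'o : IsOpen Ω') (hΩ'b : Bornology.IsBounded Ω')
    (hΩ₁o : IsOpen Ω₁) (hΩ₂o : IsOpen Ω₂) (hΩ₃o : IsOpen Ω₃)
    (h₃₂ : closure Ω₃ ⊆ Ω₂) (h₂₁ : closure Ω₂ ⊆ Ω₁) (h₁' : closure Ω₁ ⊆ Ω')
    {η : ℝ} (hη : 0 < η)
    (hsep₃₂ : ∀ x ∈ Ω₃, ∀ y ∉ Ω₂, η < dist x y)
    (hsep₂₁ : ∀ x ∈ Ω₂, ∀ y ∉ Ω₁, η < dist x y)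
    (hsep₁' : ∀ x ∈ Ω₁, ∀ y ∉ Ω', η < dist x y)
    (I₂ : Eu n → ℝ) (hI₂sm : ContDiff ℝ (⊤ : ℕ∞) I₂) (hI₂cs : HasCompactSupport I₂)
    (hI₂one : ∀ x ∈ Ω₂, I₂ x = 1) (hI₂zero : ∀ x ∉ Ω₁, I₂ x = 0) :
    ∃ C : ℝ, 0 < C ∧
      ∀ u : Eu n → Eu n, HolderBdd α (closure Ω') u →
      ∀ ε : ℝ, 0 < ε → ε < η / 2 →
      ∀ x ∈ Ω₃,
        ‖convM ρ ε (fun y => I₂ y • tensor (u y) (u y)) x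
            - tensor (convV ρ ε (fun z => I₂ z • u z) x)
                (convV ρ ε (fun z => I₂ z • u z) x)‖ ≤
          C * ε ^ (2 * α) * holderNorm α (closure Ω') u ^ 2 := by
  obtain ⟨hρsm, hρcs, hρ0, hρsupp, hρrad, hρint⟩ := hρ
  refine ⟨(2:ℝ) ^ (2 * α), Real.rpow_pos_of_pos two_pos _, ?_⟩
  intro u hu ε hε hεη x hx
  have hM0 : 0 ≤ holderNorm α (closure Ω') u := holderNorm_nonneg _ _ _
  set M := holderNorm α (closure Ω') u with hM
  have hΩ₂sub : Ω₂ ⊆ closure Ω' := fun y hy =>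
    subset_closure (h₁' (subset_closure (h₂₁ (subset_closure hy))))
  have hucont : ContinuousOn u (closure Ω') :=
    holder_continuousOn hα0 fun a ha b hb => holder_bound hα0 hu ha hb
  set h : Eu n → Eu n := fun y => I₂ y • u y with hh
  have hhcont : Continuous h := by
    rw [continuous_iff_continuousAt]
    intro z
    by_cases hz : z ∈ Ω'
    · exact (hI₂sm.continuous.continuousOn.smul (hucont.mono subset_closure)).continuousAt
        (hΩ'o.mem_nhds hz)
    · have hz1 : z ∈ (closure Ω₁)ᶜ := fun hzc => hz (h₁' hzc)
      have heq : h =ᶠ[𝓝 z] fun _ => (0 : Eu n) := by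
        filter_upwards [isClosed_closure.isOpen_compl.mem_nhds hz1] with w hw
        have hw1 : w ∉ Ω₁ := fun hw1 => hw (subset_closure hw1)
        simp [hh, hI₂zero w hw1]
      exact continuousAt_const.congr heq.symm
  have hhc : ∀ i : Fin n, Continuous fun y => h y i := fun i =>
    (EuclideanSpace.proj (𝕜 := ℝ) i).continuous.comp hhcont
  set g : Eu n → ℝ := fun y => mollify ρ ε (x - y) with hg
  have hεn : (0:ℝ) < ε ^ n := pow_pos hε n
  have hgcont : Continuous g := by
    rw [hg]
    show Continuous fun y : Eu n => (ε ^ n)⁻¹ * ρ (ε⁻¹ • (x - y))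
    exact continuous_const.mul
      (hρsm.continuous.comp ((continuous_const.sub continuous_id).const_smul ε⁻¹))
  have hg0 : ∀ y, 0 ≤ g y := by
    intro y
    simp only [hg, mollify]
    exact mul_nonneg (inv_nonneg.2 hεn.le) (hρ0 _)
  have hgsupp : ∀ y, g y ≠ 0 → dist x y < ε := by
    intro y hy
    have hρne : ρ (ε⁻¹ • (x - y)) ≠ 0 := by
      intro h0
      apply hy
      simp only [hg, mollify, h0, mul_zero]
    have hmem : ε⁻¹ • (x - y) ∈ ball (0 : Eu n) 1 := hρsupp (mem_support.2 hρne)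
    rw [mem_ball_zero_iff, norm_smul, Real.norm_eq_abs, abs_of_pos (inv_pos.2 hε)] at hmem
    rw [dist_eq_norm]
    calc ‖x - y‖ = ε * (ε⁻¹ * ‖x - y‖) := by field_simp
      _ < ε * 1 := mul_lt_mul_of_pos_left hmem hε
      _ = ε := mul_one ε
  have hgcs : HasCompactSupport g := by
    apply HasCompactSupport.intro (isCompact_closedBall x ε)
    intro y hy
    by_contra h0
    exact hy (mem_closedBall'.2 (hgsupp y h0).le)
  have hgint1 : ∫ y, g y = 1 := by
    have e1 : ∫ y, g y = ∫ z, mollify ρ ε z :=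
      integral_sub_left_eq_self (mollify ρ ε) volume x
    rw [e1]
    simp only [mollify]
    rw [MeasureTheory.integral_const_mul,
      MeasureTheory.Measure.integral_comp_inv_smul_of_nonneg volume ρ hε.le,
      finrank_euclideanSpace_fin, hρint, smul_eq_mul, mul_one]
    exact inv_mul_cancel₀ hεn.ne'
  have hball₂ : ∀ y, dist x y < ε → y ∈ Ω₂ := by
    intro y hy
    by_contra hy2
    have := hsep₃₂ x hx y hy2
    linarith
  have hx₂ : x ∈ Ω₂ := hball₂ x (by simpa using hε)
  have hheq : ∀ y, g y ≠ 0 → h y = u y := by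
    intro y hy
    simp [hh, hI₂one y (hball₂ y (hgsupp y hy))]
  have intS : ∀ F : Eu n → ℝ, Continuous F → Integrable (fun y => g y * F y) := fun F hF =>
    (hgcont.mul hF).integrable_of_hasCompactSupport hgcs.mul_right
  have intV : ∀ F : Eu n → Eu n, Continuous F → Integrable (fun y => g y • F y) := fun F hF =>
    (hgcont.smul hF).integrable_of_hasCompactSupport hgcs.smul_right
  set v : Eu n := convV ρ ε (fun z => I₂ z • u z) x with hv
  have hvdef : v = ∫ y, g y • h y := by rw [hv]; rfl
  have hvi : ∀ i, v i = ∫ y, g y * h y i := by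
    intro i
    have hcomm := (EuclideanSpace.proj (𝕜 := ℝ) i).integral_comp_comm (intV h hhcont)
    rw [hvdef]
    simp only [EuclideanSpace.proj, PiLp.proj_apply, PiLp.smul_apply, smul_eq_mul] at hcomm
    exact hcomm.symm
  have hB0 : (0:ℝ) ≤ 2 * ε := by linarith
  set B : ℝ := M * (2 * ε) ^ α with hBdef
  have hB : 0 ≤ B := mul_nonneg hM0 (Real.rpow_nonneg hB0 α)
  have key : ∀ y, g y ≠ 0 → ‖h y - v‖ ≤ B := by
    intro y hgy
    have hyΩ₂ : y ∈ Ω₂ := hball₂ y (hgsupp y hgy)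
    have hstep : h y - v = ∫ z, g z • (h y - h z) := by
      have e : (fun z => g z • (h y - h z)) = fun z => g z • h y - g z • h z :=
        funext fun z => smul_sub _ _ _
      rw [e, integral_sub (intV (fun _ => h y) continuous_const) (intV h hhcont),
        integral_smul_const, hgint1, one_smul, hvdef]
    have hptw : ∀ z, ‖g z • (h y - h z)‖ ≤ g z * B := by
      intro z
      by_cases hgz : g z = 0
      · simp [hgz]
      · have hzΩ₂ : z ∈ Ω₂ := hball₂ z (hgsupp z hgz)
        have hd : dist y z ≤ 2 * ε := by
          have h1 : dist y x < ε := by rw [dist_comm]; exact hgsupp y hgy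
          have h2 : dist x z < ε := hgsupp z hgz
          calc dist y z ≤ dist y x + dist x z := dist_triangle _ _ _
            _ ≤ 2 * ε := by linarith
        have hub : ‖u y - u z‖ ≤ B := by
          calc ‖u y - u z‖ ≤ M * dist y z ^ α :=
                holder_bound hα0 hu (hΩ₂sub hyΩ₂) (hΩ₂sub hzΩ₂)
            _ ≤ B := mul_le_mul_of_nonneg_left
                (Real.rpow_le_rpow dist_nonneg hd hα0.le) hM0
        rw [norm_smul, Real.norm_eq_abs, abs_of_nonneg (hg0 z), hheq y hgy, hheq z hgz]
        exact mul_le_mul_of_nonneg_left hub (hg0 z)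
    calc ‖h y - v‖ = ‖∫ z, g z • (h y - h z)‖ := by rw [hstep]
      _ ≤ ∫ z, ‖g z • (h y - h z)‖ := norm_integral_le_integral_norm _
      _ ≤ ∫ z, g z * B := integral_mono
          ((intV (fun z => h y - h z) (continuous_const.sub hhcont)).norm)
          (intS (fun _ => B) continuous_const) hptw
      _ = B := by rw [MeasureTheory.integral_mul_const, hgint1, one_mul]
  have entry : ∀ i j : Fin n,
      |(∫ y, g y * (h y i * h y j)) - v i * v j| ≤ B ^ 2 := by
    intro i j
    have hij : Continuous fun y => h y i * h y j := (hhc i).mul (hhc j)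
    have iA : Integrable fun y => g y * (h y i * h y j) := intS _ hij
    have iB1 : Integrable fun y => g y * h y i * v j := (intS _ (hhc i)).mul_const (v j)
    have iB2 : Integrable fun y => g y * h y j * v i := (intS _ (hhc j)).mul_const (v i)
    have iC : Integrable fun y => g y * (v i * v j) := intS _ continuous_const
    have hsplit : ∫ y, g y * ((h y i - v i) * (h y j - v j))
        = (∫ y, g y * (h y i * h y j)) - v i * v j := by
      have e : (fun y => g y * ((h y i - v i) * (h y j - v j)))
          = fun y => g y * (h y i * h y j) - g y * h y i * v j
            - g y * h y j * v i + g y * (v i * v j) := funext fun y => by ring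
      have iAB1 : Integrable fun y => g y * (h y i * h y j) - g y * h y i * v j := by
        exact iA.sub iB1
      have iAB2 : Integrable fun y =>
          g y * (h y i * h y j) - g y * h y i * v j - g y * h y j * v i := by
        exact iAB1.sub iB2
      rw [e, integral_add iAB2 iC, integral_sub iAB1 iB2,
        integral_sub iA iB1, MeasureTheory.integral_mul_const,
        MeasureTheory.integral_mul_const, MeasureTheory.integral_mul_const,
        ← hvi i, ← hvi j, hgint1]
      ring
    have hptw : ∀ y, |g y * ((h y i - v i) * (h y j - v j))| ≤ g y * B ^ 2 := by
      intro y
      by_cases hgy : g y = 0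
      · simp [hgy]
      · have hk := key y hgy
        have h1 : |h y i - v i| ≤ B := by
          have hc := coord_abs_le_norm (h y - v) i
          rw [PiLp.sub_apply] at hc
          exact hc.trans hk
        have h2 : |h y j - v j| ≤ B := by
          have hc := coord_abs_le_norm (h y - v) j
          rw [PiLp.sub_apply] at hc
          exact hc.trans hk
        rw [abs_mul, abs_of_nonneg (hg0 y), abs_mul, sq]
        exact mul_le_mul_of_nonneg_left
          (mul_le_mul h1 h2 (abs_nonneg _) hB) (hg0 y)
    calc |(∫ y, g y * (h y i * h y j)) - v i * v j|
        = |∫ y, g y * ((h y i - v i) * (h y j - v j))| := by rw [hsplit]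
      _ ≤ ∫ y, |g y * ((h y i - v i) * (h y j - v j))| := by
          exact norm_integral_le_integral_norm (μ := volume)
            (fun y => g y * ((h y i - v i) * (h y j - v j)))
      _ ≤ ∫ y, g y * B ^ 2 := integral_mono
          (intS (fun y => (h y i - v i) * (h y j - v j))
            (((hhc i).sub continuous_const).mul ((hhc j).sub continuous_const))).abs
          (intS (fun _ => B ^ 2) continuous_const) hptw
      _ = B ^ 2 := by rw [MeasureTheory.integral_mul_const, hgint1, one_mul]
  have hconvM : convM ρ ε (fun y => I₂ y • tensor (u y) (u y)) x
      = ∫ y, g y • tensor (h y) (h y) := by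
    simp only [convM]
    congr 1
    funext y
    rw [show mollify ρ ε (x - y) = g y from rfl]
    by_cases hgy : g y = 0
    · rw [hgy]; simp
    · have h1 : I₂ y = 1 := hI₂one y (hball₂ y (hgsupp y hgy))
      rw [hheq y hgy, h1, one_smul]
  have hTcont : Continuous fun y => tensor (h y) (h y) :=
    continuous_pi fun i => continuous_pi fun j => (hhc i).mul (hhc j)
  have hTint : Integrable fun y => g y • tensor (h y) (h y) :=
    (hgcont.smul hTcont).integrable_of_hasCompactSupport hgcs.smul_right
  have hMij : ∀ i j : Fin n,
      (∫ y, g y • tensor (h y) (h y)) i j = ∫ y, g y * (h y i * h y j) := by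
    intro i j
    have e1 := (ContinuousLinearMap.proj (R := ℝ)
      (φ := fun _ : Fin n => Fin n → ℝ) i).integral_comp_comm hTint
    simp only [ContinuousLinearMap.proj_apply] at e1
    have hRi : Integrable fun y => (g y • tensor (h y) (h y)) i := by
      have heq2 : (fun y => (g y • tensor (h y) (h y)) i)
          = fun y => g y • (fun j => h y i * h y j) := by
        funext y
        funext j
        simp [tensor, Pi.smul_apply, smul_eq_mul]
      rw [heq2]
      exact (hgcont.smul (continuous_pi fun j =>
        (hhc i).mul (hhc j))).integrable_of_hasCompactSupport hgcs.smul_right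
    have e2 := (ContinuousLinearMap.proj (R := ℝ)
      (φ := fun _ : Fin n => ℝ) j).integral_comp_comm hRi
    simp only [ContinuousLinearMap.proj_apply] at e2
    rw [← e1, ← e2]
    congr 1
  have hBsq : B ^ 2 = (2:ℝ) ^ (2 * α) * ε ^ (2 * α) * M ^ 2 := by
    have h1 : ((2:ℝ) * ε) ^ (2 * α) = (((2:ℝ) * ε) ^ α) ^ 2 := by
      rw [two_mul α, Real.rpow_add (by linarith : (0:ℝ) < 2 * ε), sq]
    have h2 : ((2:ℝ) * ε) ^ (2 * α) = (2:ℝ) ^ (2 * α) * ε ^ (2 * α) :=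
      Real.mul_rpow (by norm_num) hε.le
    rw [hBdef, mul_pow, ← h1, h2]
    ring
  rw [hconvM, ← hBsq]
  have hBB : (0:ℝ) ≤ B ^ 2 := sq_nonneg B
  rw [pi_norm_le_iff_of_nonneg hBB]
  intro i
  rw [pi_norm_le_iff_of_nonneg hBB]
  intro j
  simp only [Pi.sub_apply]
  rw [Real.norm_eq_abs, hMij i j]
  have := entry i j
  simpa [tensor] using this
end
end
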